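/- Let G be a finitely generated group that splits over a finitely generated subgroup C, let Γ be a Cayley graph of G with respect to a finite generating set, and let l > 0 be such that Γ \ B(C, l) has at least two deep components. If U is a set of vertices of Γ containing all vertices of some deep component of Γ \ B(C, l), then Growth(U) = Growth(G). -/
import Mathlib


/-- The growth comparison relation: `f ≼ g` iff there is `C > 0` with
`f n ≤ C * g (C*n + C) + C` for all `n`. -/
def GrowthLE (f g : ℕ → ℕ) : Prop :=
  ∃ C : ℕ, 0 < C ∧ ∀ n, f n ≤ C * g (C * n + C) + C

/-- Equivalence of growth rates. -/
def GrowthEquiv (f g : ℕ → ℕ) : Prop := GrowthLE f g ∧ GrowthLE g f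

/-- The growth function of a subset `U` of a metric space, with basepoint set `A`:
`n ↦ #(U ∩ B(A, n))`. -/
noncomputable def relGrowth {X : Type*} [MetricSpace X] (U A : Set X) : ℕ → ℕ :=
  fun n => Set.ncard {x | x ∈ U ∧ ∃ a ∈ A, dist a x ≤ (n : ℝ)}

/-- A metric space is discrete and proper iff all balls (of integer radius) are finite. -/
def DiscreteProper (X : Type*) [MetricSpace X] : Prop :=
  ∀ (x : X) (n : ℕ), {y : X | dist x y ≤ (n : ℝ)}.Finite

/-- Uniformly proper: there is a uniform bound on cardinalities of all balls of radius `n`. -/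
def UniformlyProper (X : Type*) [MetricSpace X] : Prop :=
  ∃ g : ℕ → ℕ, ∀ (x : X) (n : ℕ),
    {y : X | dist x y ≤ (n : ℝ)}.Finite ∧ Set.ncard {y : X | dist x y ≤ (n : ℝ)} ≤ g n

/-- A `c`-quasi-isometry between metric spaces. -/
def IsQuasiIsometryMS {X Y : Type*} [MetricSpace X] [MetricSpace Y] (c : ℝ) (φ : X → Y) : Prop :=
  1 ≤ c ∧
  (∀ a b : X, dist a b / c - c ≤ dist (φ a) (φ b) ∧ dist (φ a) (φ b) ≤ c * dist a b + c) ∧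
  (∀ y : Y, ∃ x : X, dist (φ x) y ≤ c)

/-- Growth function of `U ⊆ V(G)` (with the metric induced by the path-metric of `G`)
with respect to basepoint set `A`. -/
noncomputable def graphGrowth {V : Type*} (G : SimpleGraph V) (U A : Set V) : ℕ → ℕ :=
  fun n => Set.ncard {v | v ∈ U ∧ ∃ a ∈ A, G.dist a v ≤ n}

/-- `Growth(U) = Growth(G)` for `U` a set of vertices of `G` with the induced metric. -/
def GrowthEqFull {V : Type*} (G : SimpleGraph V) (U : Set V) : Prop :=
  ∃ u₀ ∈ U, GrowthEquiv (graphGrowth G Set.univ {u₀}) (graphGrowth G U {u₀})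

/-- The set of vertices protected up to (and including) time `n`. -/
def protectedUpTo {V : Type*} (W : ℕ → Set V) (n : ℕ) : Set V :=
  ⋃ i ∈ Finset.Icc 1 n, W i

/-- The set of vertices on fire at time `n`, for fire reach `r`, strategy `W` and
initial fire `X0`: `X (n+1)` consists of vertices joined to `X n` by a path of length
at most `r` avoiding `(W 1 ∪ ⋯ ∪ W (n+1)) \ X n`. -/
def fireSet {V : Type*} (G : SimpleGraph V) (r : ℕ) (W : ℕ → Set V) (X0 : Set V) : ℕ → Set V
  | 0 => X0
  | n + 1 =>
    {v | ∃ u ∈ fireSet G r W X0 n, ∃ p : G.Walk u v, p.length ≤ r ∧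
      ∀ x ∈ p.support, x ∉ protectedUpTo W (n + 1) \ fireSet G r W X0 n}

/-- The set of vertices on fire at the end of the game. -/
def burnedSet {V : Type*} (G : SimpleGraph V) (r : ℕ) (W : ℕ → Set V) (X0 : Set V) : Set V :=
  ⋃ n, fireSet G r W X0 n

/-- An `{f n}`-strategy: at each time `n ≥ 1` at most `f n` vertices are protected. -/
def IsStrategyBound {V : Type*} (f : ℕ → ℕ) (W : ℕ → Set V) : Prop :=
  ∀ n, 1 ≤ n → (W n).Finite ∧ (W n).ncard ≤ f n

/-- A finite-step strategy protects no vertices after some finite time. -/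
def FiniteStepStrategy {V : Type*} (W : ℕ → Set V) : Prop :=
  ∃ N, ∀ n, N ≤ n → W n = ∅

/-- A retaining `({f n}, r)`-strategy for the initial fire `X0`. -/
def IsRetainingStrategy {V : Type*} (G : SimpleGraph V) (f : ℕ → ℕ) (r : ℕ)
    (X0 : Set V) (W : ℕ → Set V) : Prop :=
  IsStrategyBound f W ∧ GrowthEqFull G (burnedSet G r W X0)ᶜ

/-- The `({f n}, r)`-retaining property. -/
def RetainingProperty {V : Type*} (G : SimpleGraph V) (f : ℕ → ℕ) (r : ℕ) : Prop :=
  ∀ X0 : Set V, X0.Finite → ∃ W, IsRetainingStrategy G f r X0 W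

/-- Polynomial retaining property of degree `d` (fire reach one). -/
def PolyRetaining {V : Type*} (G : SimpleGraph V) (d : ℕ) : Prop :=
  ∃ K : ℕ, 0 < K ∧ RetainingProperty G (fun n => K * n ^ d) 1

/-- The finite-step `{f n}`-retaining property (fire reach one). -/
def FiniteStepRetainingProperty {V : Type*} (G : SimpleGraph V) (f : ℕ → ℕ) : Prop :=
  ∀ X0 : Set V, X0.Finite → ∃ W, IsRetainingStrategy G f 1 X0 W ∧ FiniteStepStrategy W

/-- The finite-step polynomial retaining property of degree `d`. -/
def FiniteStepPolyRetaining {V : Type*} (G : SimpleGraph V) (d : ℕ) : Prop :=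
  ∃ K : ℕ, 0 < K ∧ FiniteStepRetainingProperty G (fun n => K * n ^ d)

/-- The `({f n}, r)`-containment property. -/
def ContainmentProperty {V : Type*} (G : SimpleGraph V) (f : ℕ → ℕ) (r : ℕ) : Prop :=
  ∀ X0 : Set V, X0.Finite →
    ∃ W, IsStrategyBound f W ∧ (burnedSet G r W X0).Finite

/-- Polynomial containment property of degree `d` (fire reach one). -/
def PolyContainment {V : Type*} (G : SimpleGraph V) (d : ℕ) : Prop :=
  ∃ K : ℕ, 0 < K ∧ ContainmentProperty G (fun n => K * n ^ d) 1

/-- The constant containment property. -/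
def ConstantContainment {V : Type*} (G : SimpleGraph V) : Prop := PolyContainment G 0

/-- `D` is (the vertex set of) a connected component of `G \ K`. -/
def ComponentAvoiding {V : Type*} (G : SimpleGraph V) (K D : Set V) : Prop :=
  D.Nonempty ∧ D ⊆ Kᶜ ∧
  (∀ u ∈ D, ∀ v ∈ D, ∃ p : G.Walk u v, ∀ x ∈ p.support, x ∉ K) ∧
  (∀ u ∈ D, ∀ v : V, v ∉ K → (∃ p : G.Walk u v, ∀ x ∈ p.support, x ∉ K) → v ∈ D)

/-- A deep component of `G \ K`: not contained in any bounded neighborhood of `K`. -/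
def IsDeepComponent {V : Type*} (G : SimpleGraph V) (K D : Set V) : Prop :=
  ComponentAvoiding G K D ∧ ∀ r : ℕ, ¬ D ⊆ {v | ∃ k ∈ K, G.dist k v ≤ r}

/-- An unbounded component of `G \ K`. -/
def IsUnboundedComponent {V : Type*} (G : SimpleGraph V) (K D : Set V) : Prop :=
  ComponentAvoiding G K D ∧ ∀ (v : V) (r : ℕ), ¬ D ⊆ {u | G.dist v u ≤ r}

/-- Uniformly locally finite graph: vertex degrees are bounded. -/
def UnifLocFinite {V : Type*} (G : SimpleGraph V) : Prop :=
  ∃ M : ℕ, ∀ v : V, (G.neighborSet v).Finite ∧ (G.neighborSet v).ncard ≤ M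

/-- Locally finite graph. -/
def LocFinite {V : Type*} (G : SimpleGraph V) : Prop := ∀ v : V, (G.neighborSet v).Finite

/-- A `c`-quasi-isometry between two connected graphs (with their path-metrics). -/
def GraphQI {V V' : Type*} (c : ℝ) (G : SimpleGraph V) (H : SimpleGraph V') (φ : V → V') : Prop :=
  1 ≤ c ∧
  (∀ a b : V, (G.dist a b : ℝ) / c - c ≤ (H.dist (φ a) (φ b) : ℝ) ∧
    (H.dist (φ a) (φ b) : ℝ) ≤ c * (G.dist a b : ℝ) + c) ∧
  (∀ y : V', ∃ x : V, (H.dist (φ x) y : ℝ) ≤ c)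

/-- The Cayley graph of a group with respect to a set `S`. -/
def cayley (G : Type) [Group G] (S : Set G) : SimpleGraph G :=
  SimpleGraph.fromRel (fun a b => a⁻¹ * b ∈ S)

/-- `S` is a finite generating set. -/
def IsFiniteGenSet {G : Type} [Group G] (S : Set G) : Prop :=
  S.Finite ∧ Subgroup.closure S = ⊤

/-- The ball of radius `n` around the identity for the word metric w.r.t. `T`. -/
def wordBall {G : Type} [Group G] (T : Set G) (n : ℕ) : Set G :=
  {g | ∃ l : List G, (∀ x ∈ l, x ∈ T ∨ x⁻¹ ∈ T) ∧ l.length ≤ n ∧ l.prod = g}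

/-- The word metric w.r.t. `T`. -/
noncomputable def wordDist {G : Type} [Group G] (T : Set G) (x y : G) : ℕ :=
  sInf {n | x⁻¹ * y ∈ wordBall T n}

/-- `G` is an amalgamated product `A ∗_C B` with `C` a proper subgroup of both factors,
where `C` corresponds to the given subgroup. -/
def SplitsOverAmalgam (G : Type) [Group G] (C : Subgroup G) : Prop :=
  ∃ (Gi : Bool → Type) (_ : ∀ i, Group (Gi i)) (K : Type) (_ : Group K)
    (φ : ∀ i, K →* Gi i),
    (∀ i, Function.Injective (φ i)) ∧ (∀ i, ¬ Function.Surjective (φ i)) ∧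
    ∃ e : G ≃* Monoid.PushoutI φ,
      C = Subgroup.comap e.toMonoidHom (Monoid.PushoutI.base φ).range

/-- `G` is an HNN-extension over the given subgroup `C`. -/
def SplitsOverHNN (G : Type) [Group G] (C : Subgroup G) : Prop :=
  ∃ (H : Type) (_ : Group H) (A B : Subgroup H) (φ : A ≃* B)
    (e : G ≃* HNNExtension H A B φ),
    C = Subgroup.comap e.toMonoidHom
      (Subgroup.map (HNNExtension.of : H →* HNNExtension H A B φ) A)

/-- `G` splits over `C`: amalgamated product with `C` proper in both factors,
or HNN-extension over `C`. -/
def SplitsOver (G : Type) [Group G] (C : Subgroup G) : Prop :=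
  SplitsOverAmalgam G C ∨ SplitsOverHNN G C

/-- Amenability of a (discrete) group: existence of a left-invariant, finitely
additive probability measure defined on all subsets. -/
def IsAmenable (G : Type) [Group G] : Prop :=
  ∃ m : Set G → ℝ, (∀ A : Set G, 0 ≤ m A) ∧ m Set.univ = 1 ∧
    (∀ A B : Set G, Disjoint A B → m (A ∪ B) = m A + m B) ∧
    (∀ (g : G) (A : Set G), m ((g * ·) '' A) = m A)


namespace Stmt9Aux

open SimpleGraph

variable {G : Type} [Group G] {S : Set G}

lemma cayley_adj {a b : G} :
    (cayley G S).Adj a b ↔ a ≠ b ∧ (a⁻¹ * b ∈ S ∨ b⁻¹ * a ∈ S) := by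
  simp [cayley, SimpleGraph.fromRel_adj]

lemma cayley_adj_mul (g : G) {a b : G} (h : (cayley G S).Adj a b) :
    (cayley G S).Adj (g * a) (g * b) := by
  rw [cayley_adj] at h ⊢
  refine ⟨fun he => h.1 (mul_left_cancel he), ?_⟩
  have h1 : (g * a)⁻¹ * (g * b) = a⁻¹ * b := by group
  have h2 : (g * b)⁻¹ * (g * a) = b⁻¹ * a := by group
  rw [h1, h2]; exact h.2

/-- Left multiplication as a graph homomorphism of the Cayley graph. -/
def mulLeftHom (g : G) : cayley G S →g cayley G S :=
  ⟨fun x => g * x, fun h => cayley_adj_mul g h⟩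

@[simp] lemma mulLeftHom_apply (g x : G) : (mulLeftHom (S := S) g) x = g * x := rfl

lemma cayley_reachable_one (hS : Subgroup.closure S = ⊤) (g : G) :
    (cayley G S).Reachable 1 g := by
  have key : ∀ x ∈ Subgroup.closure S, (cayley G S).Reachable 1 x := by
    intro x hx
    induction hx using Subgroup.closure_induction with
    | mem y hy =>
        by_cases hy1 : y = (1 : G)
        · rw [hy1]
        · exact (cayley_adj.2 ⟨fun h => hy1 h.symm, Or.inl (by simpa using hy)⟩).reachable
    | one => rfl
    | mul a b _ _ iha ihb =>
        refine iha.trans ?_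
        have h := ihb.map (mulLeftHom (S := S) a)
        simpa using h
    | inv a _ iha =>
        have h := iha.map (mulLeftHom (S := S) a⁻¹)
        have h2 : (cayley G S).Reachable a⁻¹ 1 := by simpa using h
        exact h2.symm
  exact key g (by rw [hS]; trivial)

lemma cayley_connected (hS : Subgroup.closure S = ⊤) : (cayley G S).Connected := by
  haveI : Nonempty G := ⟨1⟩
  refine ⟨fun a b => ?_⟩
  have ha := cayley_reachable_one hS (a⁻¹ * b)
  have h := ha.map (mulLeftHom (S := S) a)
  simpa [mul_inv_cancel_left] using h

variable (hconn : (cayley G S).Connected)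

include hconn in
lemma dist_mul_left_le (g a b : G) :
    (cayley G S).dist (g * a) (g * b) ≤ (cayley G S).dist a b := by
  obtain ⟨p, hp⟩ := hconn.exists_walk_length_eq_dist a b
  calc (cayley G S).dist (g * a) (g * b) ≤ (p.map (mulLeftHom (S := S) g)).length :=
        SimpleGraph.dist_le _
    _ = (cayley G S).dist a b := by rw [Walk.length_map, hp]

include hconn in
lemma dist_mul_left (g a b : G) :
    (cayley G S).dist (g * a) (g * b) = (cayley G S).dist a b := by
  refine le_antisymm (dist_mul_left_le hconn g a b) ?_
  have := dist_mul_left_le hconn g⁻¹ (g * a) (g * b)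
  simpa [inv_mul_cancel_left] using this

include hconn in
lemma dist_eq_norm (a b : G) :
    (cayley G S).dist a b = (cayley G S).dist 1 (a⁻¹ * b) := by
  have := dist_mul_left hconn a⁻¹ a b
  simpa [inv_mul_cancel] using this.symm

include hconn in
lemma norm_mul_le (a b : G) :
    (cayley G S).dist 1 (a * b) ≤ (cayley G S).dist 1 a + (cayley G S).dist 1 b := by
  have h := hconn.dist_triangle (u := (1 : G)) (v := a) (w := a * b)
  have h2 : (cayley G S).dist a (a * b) = (cayley G S).dist 1 b := by
    have := dist_mul_left hconn a 1 b
    simpa using this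
  rw [h2] at h
  exact h

include hconn in
lemma norm_inv (a : G) :
    (cayley G S).dist 1 a⁻¹ = (cayley G S).dist 1 a := by
  have h := dist_mul_left hconn a 1 a⁻¹
  simp only [mul_one, mul_inv_cancel] at h
  rw [← h, SimpleGraph.dist_comm]

include hconn in
lemma adj_dist_le_one {a b : G} (h : (cayley G S).Adj a b) :
    (cayley G S).dist a b ≤ 1 := by
  have := SimpleGraph.dist_le (Walk.cons h Walk.nil)
  simpa using this

include hconn in
/-- Balls in the Cayley graph of a finitely generated group are finite. -/
lemma ball_finite (hfin : S.Finite) (x : G) (n : ℕ) :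
    {y : G | (cayley G S).dist x y ≤ n}.Finite := by
  induction n with
  | zero =>
      refine Set.Finite.subset (Set.finite_singleton x) ?_
      intro y hy
      simp only [Set.mem_setOf_eq, Nat.le_zero] at hy
      have := (hconn.dist_eq_zero_iff).1 hy
      simp [this.symm]
  | succ n ih =>
      have hnb : ∀ z : G, {y : G | (cayley G S).Adj z y}.Finite := by
        intro z
        refine Set.Finite.subset (((hfin.union (hfin.image Inv.inv)).image
          (fun s => z * s))) ?_
        intro y hy
        simp only [Set.mem_setOf_eq] at hy
        rw [cayley_adj] at hy
        rcases hy.2 with h | h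
        · exact ⟨z⁻¹ * y, Or.inl h, by simp⟩
        · exact ⟨z⁻¹ * y, Or.inr ⟨y⁻¹ * z, h, by simp [mul_inv_rev]⟩, by simp⟩
      refine Set.Finite.subset (ih.union (Set.Finite.biUnion ih
        (fun z _ => hnb z))) ?_
      intro y hy
      simp only [Set.mem_setOf_eq] at hy
      by_cases hle : (cayley G S).dist x y ≤ n
      · exact Or.inl hle
      · have hne : (cayley G S).dist x y ≠ 0 := by omega
        obtain ⟨p, hp⟩ := SimpleGraph.exists_walk_of_dist_ne_zero hne
        -- walk from x to y of length dist x y = n+1 ≥ 1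
        have hlen : p.reverse.length = (cayley G S).dist x y := by
          rw [Walk.length_reverse, hp]
        cases hq : p.reverse with
        | nil =>
            exfalso
            rw [hq] at hlen
            simp only [Walk.length_nil] at hlen
            omega
        | @cons _ z _ hadj q =>
            refine Or.inr (Set.mem_biUnion (s := {y : G | (cayley G S).dist x y ≤ n})
              ?_ hadj.symm)
            have hdle : (cayley G S).dist z x ≤ q.length := SimpleGraph.dist_le q
            have : q.length + 1 = (cayley G S).dist x y := by
              rw [← hlen, hq]; simp
            rw [SimpleGraph.dist_comm] at hdle
            simp only [Set.mem_setOf_eq]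
            omega

variable {C : Subgroup G}

/-- Distance to the subgroup `C`. -/
noncomputable def dC (S : Set G) (C : Subgroup G) (x : G) : ℕ :=
  sInf ((fun c => (cayley G S).dist c x) '' (C : Set G))

lemma dC_attained (x : G) : ∃ c ∈ (C : Set G), (cayley G S).dist c x = dC S C x := by
  have hne : ((fun c => (cayley G S).dist c x) '' (C : Set G)).Nonempty :=
    ⟨_, ⟨1, C.one_mem, rfl⟩⟩
  have := Nat.sInf_mem hne
  obtain ⟨c, hc, hval⟩ := this
  exact ⟨c, hc, hval⟩

lemma dC_le {c : G} (hc : c ∈ (C : Set G)) (x : G) :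
    dC S C x ≤ (cayley G S).dist c x :=
  Nat.sInf_le ⟨c, hc, rfl⟩

include hconn in
lemma dC_mul {c : G} (hc : c ∈ (C : Set G)) (x : G) :
    dC S C (c * x) = dC S C x := by
  have key : ∀ (d : G), d ∈ (C : Set G) → ∀ y : G, dC S C (d * y) ≤ dC S C y := by
    intro d hd y
    obtain ⟨c₀, hc₀, hval⟩ := dC_attained (S := S) (C := C) y
    have := dC_le (S := S) (C := C) (c := d * c₀) (mul_mem hd hc₀) (d * y)
    rw [dist_mul_left hconn d c₀ y, hval] at this
    exact this
  refine le_antisymm (key c hc x) ?_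
  have := key c⁻¹ (inv_mem hc) (c * x)
  rwa [inv_mul_cancel_left] at this

include hconn in
lemma dC_lipschitz (x y : G) : dC S C y ≤ dC S C x + (cayley G S).dist x y := by
  obtain ⟨c₀, hc₀, hval⟩ := dC_attained (S := S) (C := C) x
  calc dC S C y ≤ (cayley G S).dist c₀ y := dC_le hc₀ y
    _ ≤ (cayley G S).dist c₀ x + (cayley G S).dist x y := hconn.dist_triangle
    _ = dC S C x + (cayley G S).dist x y := by rw [hval]

lemma walk_ivt {f : G → ℕ} {m : ℕ}
    (hf : ∀ a b : G, (cayley G S).Adj a b → f b ≤ f a + 1) :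
    ∀ {u v : G} (p : (cayley G S).Walk u v), f u ≤ m → m ≤ f v →
      ∃ x ∈ p.support, f x = m := by
  intro u v p
  induction p with
  | nil =>
      intro hu hv
      exact ⟨_, Walk.start_mem_support _, le_antisymm hu hv⟩
  | @cons a b c h q ih =>
      intro hu hv
      by_cases hm : f a = m
      · exact ⟨a, Walk.start_mem_support _, hm⟩
      · have hb : f b ≤ m := by
          have := hf a b h
          omega
        obtain ⟨x, hx, hxm⟩ := ih hb hv
        exact ⟨x, by simp only [Walk.support_cons, List.mem_cons]; exact Or.inr hx, hxm⟩

lemma walk_exit {L : Set G} :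
    ∀ {a b : G} (p : (cayley G S).Walk a b), a ∉ L → b ∈ L →
      ∃ y, y ∈ p.support ∧ (∃ r : (cayley G S).Walk a y, ∀ x ∈ r.support, x ∉ L) ∧
        ∃ q0 ∈ L, (cayley G S).Adj y q0 := by
  intro a b p
  induction p with
  | nil =>
      intro ha hb
      exact absurd hb ha
  | @cons a b' c h q ih =>
      intro ha hb
      by_cases hbL : b' ∈ L
      · refine ⟨a, Walk.start_mem_support _, ⟨Walk.nil, ?_⟩, ⟨b', hbL, h⟩⟩
        intro x hx
        simp only [Walk.support_nil, List.mem_singleton] at hx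
        subst hx; exact ha
      · obtain ⟨y, hy, ⟨r, hr⟩, hq0⟩ := ih hbL hb
        refine ⟨y, by simp only [Walk.support_cons, List.mem_cons]; exact Or.inr hy,
          ⟨Walk.cons h r, ?_⟩, hq0⟩
        intro x hx
        rw [Walk.support_cons] at hx
        rcases List.mem_cons.1 hx with rfl | hx
        · exact ha
        · exact hr x hx

lemma support_in_component {L D : Set G}
    (h4 : ∀ u ∈ D, ∀ v : G, v ∉ L →
      (∃ p : (cayley G S).Walk u v, ∀ x ∈ p.support, x ∉ L) → v ∈ D)
    {u v : G} (hu : u ∈ D) (p : (cayley G S).Walk u v)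
    (hav : ∀ x ∈ p.support, x ∉ L) : ∀ x ∈ p.support, x ∈ D := by
  classical
  intro x hx
  exact h4 u hu x (hav x hx)
    ⟨p.takeUntil x hx, fun z hz => hav z (Walk.support_takeUntil_subset _ hx hz)⟩

include hconn in
lemma ball_subset_component {L D : Set G} {l : ℕ}
    (hLiff : ∀ x : G, x ∈ L ↔ dC S C x ≤ l)
    (h4 : ∀ u ∈ D, ∀ v : G, v ∉ L →
      (∃ p : (cayley G S).Walk u v, ∀ x ∈ p.support, x ∉ L) → v ∈ D)
    {p0 : G} (hp0 : p0 ∈ D) {m : ℕ} (hdeep : m + l < dC S C p0)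
    {v : G} (hv : (cayley G S).dist p0 v ≤ m) : v ∈ D := by
  classical
  obtain ⟨w, hw⟩ := hconn.exists_walk_length_eq_dist p0 v
  have hsup : ∀ x ∈ w.support, x ∉ L := by
    intro x hx
    have hd : (cayley G S).dist p0 x ≤ m := by
      have h1 : (cayley G S).dist p0 x ≤ (w.takeUntil x hx).length :=
        SimpleGraph.dist_le _
      have h2 := Walk.length_takeUntil_le w hx
      omega
    have hlip := dC_lipschitz hconn (C := C) x p0
    have hcomm : (cayley G S).dist x p0 = (cayley G S).dist p0 x :=
      SimpleGraph.dist_comm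
    rw [hLiff]
    omega
  exact h4 p0 hp0 v (hsup v (Walk.end_mem_support w)) ⟨w, hsup⟩

include hconn in
/-- Deep components are linearly deep: key geometric lemma. -/
lemma star {L D : Set G} {l : ℕ}
    (hfin : S.Finite)
    (hLiff : ∀ x : G, x ∈ L ↔ dC S C x ≤ l)
    (h3 : ∀ u ∈ D, ∀ v ∈ D, ∃ p : (cayley G S).Walk u v, ∀ x ∈ p.support, x ∉ L)
    (h4 : ∀ u ∈ D, ∀ v : G, v ∉ L →
      (∃ p : (cayley G S).Walk u v, ∀ x ∈ p.support, x ∉ L) → v ∈ D)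
    (hdeepD : ∀ r : ℕ, ¬ D ⊆ {v | ∃ k ∈ L, (cayley G S).dist k v ≤ r})
    {u₀ : G} (hu₀ : u₀ ∈ D) :
    ∃ K : ℕ, ∀ n : ℕ, ∃ p ∈ D, (cayley G S).dist u₀ p ≤ K + 2 * n ∧
      ∀ v : G, (cayley G S).dist p v ≤ n → v ∈ D := by
  classical
  -- the choice gadget
  set P : G → Prop := fun h => ∃ c ∈ (C : Set G), c * h ∈ D with hP
  set γf : G → G := fun h => if hp : P h then hp.choose else 1 with hγfdef
  have hγf : ∀ h : G, P h → γf h ∈ (C : Set G) ∧ γf h * h ∈ D := by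
    intro h hp
    have heq : γf h = hp.choose := by rw [hγfdef]; exact dif_pos hp
    rw [heq]
    exact ⟨hp.choose_spec.1, hp.choose_spec.2⟩
  have hball : {y : G | (cayley G S).dist 1 y ≤ l + 1}.Finite :=
    ball_finite hconn hfin 1 (l + 1)
  set K₀ : ℕ := hball.toFinset.sup (fun h => (cayley G S).dist 1 (γf h)) with hK₀def
  have hK₀ : ∀ h : G, (cayley G S).dist 1 h ≤ l + 1 →
      (cayley G S).dist 1 (γf h) ≤ K₀ := by
    intro h hh
    exact Finset.le_sup (f := fun h => (cayley G S).dist 1 (γf h))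
      (hball.mem_toFinset.2 hh)
  set d₀ := dC S C u₀ with hd₀
  refine ⟨(cayley G S).dist u₀ 1 + K₀ + 2 * d₀ + 3 * l + 3, ?_⟩
  intro n
  set M := max n d₀ with hM
  set N := M + l with hN
  -- a very deep point of D
  obtain ⟨w', hw'D, hw'deep⟩ := Set.not_subset.1 (hdeepD (N + 1 + l))
  have hw'dC : N + 1 < dC S C w' := by
    obtain ⟨c₀, hc₀, hval⟩ := dC_attained (S := S) (C := C) w'
    have hc₀L : c₀ ∈ L := by
      rw [hLiff]
      have h1 := dC_le (S := S) (C := C) hc₀ c₀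
      have h2 : (cayley G S).dist c₀ c₀ = 0 := SimpleGraph.dist_self
      omega
    have hgt : ¬ (cayley G S).dist c₀ w' ≤ N + 1 + l := by
      intro hle
      exact hw'deep ⟨c₀, hc₀L, hle⟩
    omega
  -- walk from u₀ to w' inside D
  obtain ⟨pw, hpw⟩ := h3 u₀ hu₀ w' hw'D
  have hsupD : ∀ x ∈ pw.support, x ∈ D := support_in_component h4 hu₀ pw hpw
  -- intermediate value: a point of depth exactly N + 1
  have hadjdC : ∀ a b : G, (cayley G S).Adj a b → dC S C b ≤ dC S C a + 1 := by
    intro a b hab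
    have h1 := dC_lipschitz hconn (C := C) a b
    have h2 := adj_dist_le_one hconn hab
    omega
  have hstart : dC S C u₀ ≤ N + 1 := by omega
  obtain ⟨w, hwsup, hwdC⟩ := walk_ivt hadjdC pw hstart (le_of_lt hw'dC)
  have hwD : w ∈ D := hsupD w hwsup
  -- closest point of C to w
  obtain ⟨c₀, hc₀, hc₀val⟩ := dC_attained (S := S) (C := C) w
  set z := c₀⁻¹ * w with hz
  have hczw : c₀ * z = w := by rw [hz, mul_inv_cancel_left]
  have hzval : (cayley G S).dist 1 z = N + 1 := by
    have h := dist_mul_left hconn c₀ 1 z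
    rw [mul_one, hczw] at h
    rw [← h, hc₀val, hwdC]
  have hzdC : dC S C z = N + 1 := by
    rw [hz, dC_mul hconn (inv_mem hc₀) w, hwdC]
  have hzL : z ∉ L := by
    rw [hLiff]
    omega
  have h1L : (1 : G) ∈ L := by
    rw [hLiff]
    have h1 := dC_le (S := S) (C := C) (C.one_mem) 1
    have h2 : (cayley G S).dist (1 : G) 1 = 0 := SimpleGraph.dist_self
    omega
  -- geodesic from z to 1 and its exit point from the complement of L
  obtain ⟨q, hq⟩ := hconn.exists_walk_length_eq_dist z 1
  have hqlen : q.length = N + 1 := by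
    rw [hq, SimpleGraph.dist_comm, hzval]
  obtain ⟨y, hysup, ⟨r, hr⟩, q1, hq1L, hadjy⟩ := walk_exit q hzL h1L
  have hy1 : (cayley G S).dist y 1 ≤ N + 1 := by
    have h1 : (cayley G S).dist y 1 ≤ (q.dropUntil y hysup).length :=
      SimpleGraph.dist_le _
    have h2 := Walk.length_dropUntil_le q hysup
    omega
  -- the element of C near the exit point
  have hq1dC : dC S C q1 ≤ l := (hLiff q1).1 hq1L
  obtain ⟨cs, hcs, hcsval⟩ := dC_attained (S := S) (C := C) q1
  have hcsy : (cayley G S).dist cs y ≤ l + 1 := by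
    have htri := hconn.dist_triangle (u := cs) (v := q1) (w := y)
    have h1 : (cayley G S).dist q1 y ≤ 1 := adj_dist_le_one hconn hadjy.symm
    omega
  set h₀ := cs⁻¹ * y with hh₀
  have hcsh₀ : cs * h₀ = y := by rw [hh₀, mul_inv_cancel_left]
  have hh₀n : (cayley G S).dist 1 h₀ ≤ l + 1 := by
    have h := dist_mul_left hconn cs 1 h₀
    rw [mul_one, hcsh₀] at h
    omega
  -- y is not in L
  have hyL : y ∉ L := hr y (Walk.end_mem_support r)
  -- translating the walk r by c₀ shows that c₀ * y ∈ D
  have hc₀yD : c₀ * y ∈ D := by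
    apply h4 w hwD (c₀ * y)
    · rw [hLiff, dC_mul hconn hc₀ y]
      rw [hLiff] at hyL
      omega
    · refine ⟨((r.map (mulLeftHom (S := S) c₀)).copy (by rw [mulLeftHom_apply, hczw])
        (by rw [mulLeftHom_apply])), ?_⟩
      intro x hx
      rw [Walk.support_copy, Walk.support_map] at hx
      obtain ⟨x', hx', rfl⟩ := List.mem_map.1 hx
      rw [mulLeftHom_apply, hLiff, dC_mul hconn hc₀ x']
      have := hr x' hx'
      rw [hLiff] at this
      omega
  have hPh₀ : P h₀ := by
    refine ⟨c₀ * cs, mul_mem hc₀ hcs, ?_⟩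
    rw [hh₀, mul_assoc, mul_inv_cancel_left]
    exact hc₀yD
  obtain ⟨hγC, hγD⟩ := hγf h₀ hPh₀
  -- the linearly deep point p of D
  set g0 := γf h₀ * cs⁻¹ with hg0
  have hg0C : g0 ∈ (C : Set G) := mul_mem hγC (inv_mem hcs)
  set p := g0 * z with hpdef
  have hpdC : dC S C p = N + 1 := by
    rw [hpdef, dC_mul hconn hg0C, hzdC]
  have hg0y : g0 * y = γf h₀ * h₀ := by
    rw [hg0, hh₀, mul_assoc]
  have hpD : p ∈ D := by
    apply h4 (γf h₀ * h₀) hγD p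
    · rw [hLiff, hpdC]
      omega
    · refine ⟨((r.map (mulLeftHom (S := S) g0)).reverse.copy
        (by rw [mulLeftHom_apply, hg0y]) (by rw [mulLeftHom_apply, hpdef])), ?_⟩
      intro x hx
      rw [Walk.support_copy, Walk.support_reverse, List.mem_reverse,
        Walk.support_map] at hx
      obtain ⟨x', hx', rfl⟩ := List.mem_map.1 hx
      rw [mulLeftHom_apply, hLiff, dC_mul hconn hg0C x']
      have := hr x' hx'
      rw [hLiff] at this
      omega
  -- norm estimates
  have hγn : (cayley G S).dist 1 (γf h₀) ≤ K₀ := hK₀ h₀ hh₀n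
  have hcsn : (cayley G S).dist 1 cs ≤ N + l + 2 := by
    have h1 : (cayley G S).dist 1 cs = (cayley G S).dist cs 1 := SimpleGraph.dist_comm
    have htri := hconn.dist_triangle (u := cs) (v := y) (w := (1 : G))
    omega
  have hcsin : (cayley G S).dist 1 cs⁻¹ = (cayley G S).dist 1 cs := norm_inv hconn cs
  have hpn : (cayley G S).dist 1 p ≤ K₀ + 2 * N + l + 3 := by
    have h1 : (cayley G S).dist 1 p ≤ (cayley G S).dist 1 g0 + (cayley G S).dist 1 z := by
      rw [hpdef]; exact norm_mul_le hconn g0 z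
    have h2 : (cayley G S).dist 1 g0 ≤ (cayley G S).dist 1 (γf h₀) +
        (cayley G S).dist 1 cs⁻¹ := by
      rw [hg0]; exact norm_mul_le hconn (γf h₀) cs⁻¹
    omega
  have hup : (cayley G S).dist u₀ p ≤ (cayley G S).dist u₀ 1 + K₀ + 2 * d₀ + 3 * l + 3 + 2 * n := by
    have htri := hconn.dist_triangle (u := u₀) (v := (1 : G)) (w := p)
    omega
  refine ⟨p, hpD, hup, ?_⟩
  intro v hv
  exact ball_subset_component hconn hLiff h4 hpD
    (show n + l < dC S C p by rw [hpdC]; omega) hv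

end Stmt9Aux

theorem stmt9 (G : Type) [Group G] (S : Set G) (hS : IsFiniteGenSet S)
    (C : Subgroup G) (hC : Subgroup.FG C) (hsplit : SplitsOver G C)
    (l : ℕ) (hl : 0 < l)
    (L : Set G) (hL : L = {g | ∃ c ∈ (C : Set G), (cayley G S).dist c g ≤ l})
    (hdeep : ∃ D₁ D₂ : Set G, IsDeepComponent (cayley G S) L D₁ ∧
      IsDeepComponent (cayley G S) L D₂ ∧ D₁ ≠ D₂)
    (U D : Set G) (hD : IsDeepComponent (cayley G S) L D) (hDU : D ⊆ U) :
    GrowthEqFull (cayley G S) U := by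
  classical
  obtain ⟨⟨hne, hsub, h3, h4⟩, hdeepD⟩ := hD
  obtain ⟨u₀, hu₀D⟩ := hne
  have hconn := Stmt9Aux.cayley_connected hS.2
  have hfin := hS.1
  have hLiff : ∀ x : G, x ∈ L ↔ Stmt9Aux.dC S C x ≤ l := by
    intro x
    rw [hL]
    constructor
    · rintro ⟨c, hc, hcx⟩
      exact le_trans (Stmt9Aux.dC_le hc x) hcx
    · intro h
      obtain ⟨c, hc, hval⟩ := Stmt9Aux.dC_attained (S := S) (C := C) x
      exact ⟨c, hc, by omega⟩
  obtain ⟨K, hK⟩ := Stmt9Aux.star hconn hfin hLiff h3 h4 hdeepD hu₀D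
  have hballfin : ∀ m : ℕ, {y : G | (cayley G S).dist u₀ y ≤ m}.Finite :=
    fun m => Stmt9Aux.ball_finite hconn hfin u₀ m
  have hfeq : ∀ n, graphGrowth (cayley G S) Set.univ {u₀} n =
      Set.ncard {v : G | (cayley G S).dist u₀ v ≤ n} := by
    intro n
    unfold graphGrowth
    congr 1
    ext v
    simp
  have hgeq : ∀ n, graphGrowth (cayley G S) U {u₀} n =
      Set.ncard {v : G | v ∈ U ∧ (cayley G S).dist u₀ v ≤ n} := by
    intro n
    unfold graphGrowth
    congr 1
    ext v
    simp
  refine ⟨u₀, hDU hu₀D, ⟨K + 3, by omega, ?_⟩, ⟨1, by omega, ?_⟩⟩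
  · -- GrowthLE full U
    intro n
    obtain ⟨p, hpD, hpdist, hpball⟩ := hK n
    rw [hfeq, hgeq]
    set T := {v : G | v ∈ U ∧ (cayley G S).dist u₀ v ≤ (K + 3) * n + (K + 3)} with hT
    have hTfin : T.Finite := by
      refine Set.Finite.subset (hballfin ((K + 3) * n + (K + 3))) ?_
      intro v hv
      exact hv.2
    have hstep : Set.ncard {v : G | (cayley G S).dist u₀ v ≤ n} ≤ Set.ncard T := by
      refine Set.ncard_le_ncard_of_injOn (fun x => p * u₀⁻¹ * x) ?_ ?_ hTfin
      · intro x hx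
        show p * u₀⁻¹ * x ∈ T
        simp only [hT, Set.mem_setOf_eq] at hx ⊢
        have hd : (cayley G S).dist p (p * u₀⁻¹ * x) ≤ n := by
          have h := Stmt9Aux.dist_mul_left hconn (p * u₀⁻¹) u₀ x
          rw [inv_mul_cancel_right] at h
          rw [mul_assoc] at h ⊢
          omega
        have hmem : p * u₀⁻¹ * x ∈ D := hpball _ hd
        refine ⟨hDU hmem, ?_⟩
        have htri := hconn.dist_triangle (u := u₀) (v := p) (w := p * u₀⁻¹ * x)
        have hle : (cayley G S).dist u₀ (p * u₀⁻¹ * x) ≤ K + 3 * n := by omega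
        have : K + 3 * n ≤ (K + 3) * n + (K + 3) := by nlinarith
        omega
      · intro a _ b _ hab
        exact mul_left_cancel hab
    have hmul : Set.ncard T ≤ (K + 3) * Set.ncard T :=
      Nat.le_mul_of_pos_left _ (by omega)
    omega
  · -- GrowthLE U full
    intro n
    rw [hfeq, hgeq]
    have hsub2 : {v : G | v ∈ U ∧ (cayley G S).dist u₀ v ≤ n} ⊆
        {v : G | (cayley G S).dist u₀ v ≤ 1 * n + 1} := by
      intro v hv
      simp only [Set.mem_setOf_eq] at hv ⊢
      omega
    have h := Set.ncard_le_ncard hsub2 (hballfin (1 * n + 1))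
    omega
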